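/- Let F : ℝ^d → ℝ be differentiable, λ-strongly convex with G-Lipschitz gradient, minimizer w*, and let w^{t+1} = w^t − (1/G)·g^t with ‖g^t − ∇F(w^t)‖ ≤ Δ for all t. Then the limit superior of ‖w^T − w*‖ as T → ∞ is at most (Δ/G)·(G + λ)/λ ≤ 2Δ/λ (when λ ≤ G). -/

import Mathlib

open Filter

variable {d : ℕ}
local notation "E" => EuclideanSpace ℝ (Fin d)

/-- derivative of F along a line -/
lemma line_hasDerivAt (F : E → ℝ) (hdiff : Differentiable ℝ F) (x v : E) (t : ℝ) :
    HasDerivAt (fun s : ℝ => F (x + s • v)) (inner ℝ (gradient F (x + t • v)) v : ℝ) t := by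
  have h1 : HasGradientAt F (gradient F (x + t • v)) (x + t • v) :=
    (hdiff (x + t • v)).hasGradientAt
  have h2 := h1.hasFDerivAt
  have h3 : HasDerivAt (fun s : ℝ => x + s • v) v t := by
    simpa using ((hasDerivAt_id t).smul_const v).const_add x
  have := h2.comp_hasDerivAt t h3
  simp at this ⊢; exact this

/-- Descent lemma -/
lemma descent (F : E → ℝ) (G : ℝ) (hG : 0 < G) (hdiff : Differentiable ℝ F)
    (hsmooth : ∀ x y : E, ‖gradient F x - gradient F y‖ ≤ G * ‖x - y‖) (x y : E) :
    F y ≤ F x + (inner ℝ (gradient F x) (y - x) : ℝ) + (G / 2) * ‖y - x‖ ^ 2 := by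
  set v := y - x with hv
  set ψ : ℝ → ℝ := fun t =>
    F (x + t • v) - t * (inner ℝ (gradient F x) v : ℝ) - G * t ^ 2 / 2 * ‖v‖ ^ 2 with hψ
  have hd : ∀ t : ℝ, HasDerivAt ψ
      ((inner ℝ (gradient F (x + t • v)) v : ℝ) - (inner ℝ (gradient F x) v : ℝ)
        - G * t * ‖v‖ ^ 2) t := by
    intro t
    have h1 := line_hasDerivAt F hdiff x v t
    have h2 : HasDerivAt (fun t : ℝ => t * (inner ℝ (gradient F x) v : ℝ))
        (inner ℝ (gradient F x) v : ℝ) t := by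
      simpa using (hasDerivAt_id t).mul_const (inner ℝ (gradient F x) v : ℝ)
    have h3 : HasDerivAt (fun t : ℝ => G * t ^ 2 / 2 * ‖v‖ ^ 2) (G * t * ‖v‖ ^ 2) t := by
      have h := (((hasDerivAt_pow 2 t).const_mul G).div_const 2).mul_const (‖v‖ ^ 2)
      convert h using 1
      case e'_9 => show G * t * ‖v‖ ^ 2 = G * ((2:ℝ) * t ^ 1) / 2 * ‖v‖ ^ 2; ring
      all_goals rfl
    exact (h1.sub h2).sub h3
  have hmono : ψ 1 ≤ ψ 0 := by
    have hcont : ContinuousOn ψ (Set.Icc 0 1) :=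
      fun t _ => ((hd t).continuousAt).continuousWithinAt
    have : AntitoneOn ψ (Set.Icc (0:ℝ) 1) := by
      apply antitoneOn_of_deriv_nonpos (convex_Icc 0 1) hcont
      · intro t ht
        exact ((hd t).differentiableAt).differentiableWithinAt
      · intro t ht
        rw [interior_Icc] at ht
        rw [(hd t).deriv]
        have hle : (inner ℝ (gradient F (x + t • v)) v : ℝ) - (inner ℝ (gradient F x) v : ℝ)
            ≤ G * t * ‖v‖ ^ 2 := by
          have := real_inner_le_norm (gradient F (x + t • v) - gradient F x) v
          have h2 := hsmooth (x + t • v) x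
          have h3 : ‖x + t • v - x‖ = t * ‖v‖ := by
            rw [add_sub_cancel_left, norm_smul, Real.norm_eq_abs, abs_of_pos ht.1]
          rw [inner_sub_left] at this
          rw [h3] at h2
          nlinarith [norm_nonneg v, ht.1.le,
            mul_le_mul_of_nonneg_right h2 (norm_nonneg v)]
        linarith
    exact this (by simp) (by simp) zero_le_one
  have h0 : ψ 0 = F x := by simp [hψ]
  have h1 : ψ 1 = F y - (inner ℝ (gradient F x) v : ℝ) - G / 2 * ‖v‖ ^ 2 := by
    simp [hψ]; simp [hv]
  rw [h0, h1] at hmono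
  linarith

lemma grad_zero (F : E → ℝ) (hdiff : Differentiable ℝ F) (wstar : E)
    (hmin : ∀ z, F wstar ≤ F z) : gradient F wstar = 0 := by
  have hloc : IsLocalMin F wstar := Filter.Eventually.of_forall hmin
  have h0 : fderiv ℝ F wstar = 0 := hloc.fderiv_eq_zero
  simp [gradient, h0]

/-- Coercivity -/
lemma coercive (F : E → ℝ) (lam G : ℝ) (hlam : 0 < lam) (hG : 0 < G) (hlamG : lam ≤ G)
    (hdiff : Differentiable ℝ F)
    (hsc : ∀ x y : E, F y ≥ F x + (inner ℝ (gradient F x) (y - x) : ℝ) + (lam / 2) * ‖y - x‖ ^ 2)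
    (hsmooth : ∀ x y : E, ‖gradient F x - gradient F y‖ ≤ G * ‖x - y‖) (x y : E) :
    (G + lam) * (inner ℝ (gradient F x - gradient F y) (x - y) : ℝ) ≥
      ‖gradient F x - gradient F y‖ ^ 2 + lam * G * ‖x - y‖ ^ 2 := by
  set D := gradient F x - gradient F y with hD
  set s := x - y with hs
  set dd := D - lam • s with hdd
  -- key inequality: ∀ v, 2⟨dd,v⟩ ≤ ⟨dd,s⟩ + (G-lam)‖v‖²
  have key : ∀ v : E, 2 * (inner ℝ dd v : ℝ) ≤ (inner ℝ dd s : ℝ) + (G - lam) * ‖v‖ ^ 2 := by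
    intro v
    have H1 := hsc x (y + v)
    have H2 := descent F G hG hdiff hsmooth y (y + v)
    have H3 := hsc y (x - v)
    have H4 := descent F G hG hdiff hsmooth x (x - v)
    have e1 : y + v - x = v - s := by rw [hs]; abel
    have e2 : y + v - y = v := by abel
    have e3 : x - v - y = s - v := by rw [hs]; abel
    have e4 : x - v - x = -v := by abel
    rw [e1] at H1; rw [e2] at H2; rw [e3] at H3; rw [e4] at H4
    have hnv : ‖s - v‖ = ‖v - s‖ := by rw [norm_sub_rev]
    have hnv2 : ‖(-v : E)‖ = ‖v‖ := norm_neg v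
    rw [hnv] at H3; rw [hnv2] at H4
    -- inner products expansion
    have i1 : (inner ℝ (gradient F x) (v - s) : ℝ) + (inner ℝ (gradient F y) (s - v) : ℝ)
        = (inner ℝ D (v - s) : ℝ) := by
      rw [hD, inner_sub_left]
      have : (inner ℝ (gradient F y) (s - v) : ℝ) = - (inner ℝ (gradient F y) (v - s) : ℝ) := by
        rw [← inner_neg_right]; congr 1; abel
      rw [this]; ring
    have i2 : (inner ℝ (gradient F y) v : ℝ) + (inner ℝ (gradient F x) (-v) : ℝ)
        = - (inner ℝ D v : ℝ) := by
      rw [hD, inner_sub_left, inner_neg_right]; ring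
    have hvs : ‖v - s‖ ^ 2 = ‖v‖ ^ 2 - 2 * (inner ℝ v s : ℝ) + ‖s‖ ^ 2 := by
      rw [norm_sub_sq_real]
    have hdds : (inner ℝ dd s : ℝ) = (inner ℝ D s : ℝ) - lam * ‖s‖ ^ 2 := by
      rw [hdd, inner_sub_left, real_inner_smul_left, real_inner_self_eq_norm_sq]
    have hddv : (inner ℝ dd v : ℝ) = (inner ℝ D v : ℝ) - lam * (inner ℝ s v : ℝ) := by
      rw [hdd, inner_sub_left, real_inner_smul_left]
    have hsym : (inner ℝ s v : ℝ) = (inner ℝ v s : ℝ) := real_inner_comm v s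
    have i3 : (inner ℝ D (v - s) : ℝ) = (inner ℝ D v : ℝ) - (inner ℝ D s : ℝ) :=
      inner_sub_right D v s
    have hvsl : lam * ‖v - s‖ ^ 2
        = lam * (‖v‖ ^ 2 - 2 * (inner ℝ v s : ℝ) + ‖s‖ ^ 2) := by rw [hvs]
    have S1 : (inner ℝ (gradient F x) (v - s) : ℝ) + (inner ℝ (gradient F y) (s - v) : ℝ)
        + lam * ‖v - s‖ ^ 2
        ≤ (inner ℝ (gradient F y) v : ℝ) + (inner ℝ (gradient F x) (-v) : ℝ) + G * ‖v‖ ^ 2 := by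
      linarith [H1, H2, H3, H4]
    have S2 : (inner ℝ D v : ℝ) - (inner ℝ D s : ℝ) + lam * ‖v - s‖ ^ 2
        ≤ - (inner ℝ D v : ℝ) + G * ‖v‖ ^ 2 := by linarith [S1, i1, i2, i3]
    have S3 : 2 * (inner ℝ D v : ℝ) - 2 * lam * (inner ℝ v s : ℝ)
        ≤ (inner ℝ D s : ℝ) - lam * ‖s‖ ^ 2 + (G - lam) * ‖v‖ ^ 2 := by
      linarith [S2, hvsl]
    have hsyml : lam * (inner ℝ s v : ℝ) = lam * (inner ℝ v s : ℝ) := by rw [hsym]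
    linarith [S3, hdds, hddv, hsyml]
  -- derive ‖dd‖² ≤ (G-lam)⟨dd,s⟩
  have hcoco : ‖dd‖ ^ 2 ≤ (G - lam) * (inner ℝ dd s : ℝ) := by
    rcases eq_or_lt_of_le hlamG with heq | hlt
    · subst heq
      have hzero : ‖dd‖ ^ 2 ≤ 0 := by
        by_contra hpos
        push_neg at hpos
        have hdpos : 0 < ‖dd‖ ^ 2 := hpos
        set t : ℝ := ((inner ℝ dd s : ℝ) + 1) / (2 * ‖dd‖ ^ 2) with ht
        have hkey := key (t • dd)
        rw [real_inner_smul_right, real_inner_self_eq_norm_sq] at hkey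
        have hne : ‖dd‖ ^ 2 ≠ 0 := ne_of_gt hdpos
        have ht2 : 2 * (t * ‖dd‖ ^ 2) = (inner ℝ dd s : ℝ) + 1 := by
          rw [ht, div_mul_eq_mul_div, mul_div_assoc', div_eq_iff (mul_ne_zero two_ne_zero hne)]; ring
        have hz : (lam - lam) * ‖t • dd‖ ^ 2 = 0 := by ring
        linarith [hkey, ht2, hz]
      have hz' : (lam - lam) * (inner ℝ dd s : ℝ) = 0 := by ring
      linarith [hzero, hz']
    · have hl : 0 < G - lam := by linarith
      have := key ((1 / (G - lam)) • dd)
      rw [real_inner_smul_right, norm_smul, real_inner_self_eq_norm_sq] at this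
      rw [Real.norm_eq_abs, abs_of_pos (by positivity : (0:ℝ) < 1 / (G - lam))] at this
      rw [mul_pow] at this
      have h1 : (G - lam) * ((1 / (G - lam)) ^ 2 * ‖dd‖ ^ 2) = (1 / (G - lam)) * ‖dd‖ ^ 2 := by
        field_simp
      rw [h1] at this
      have h2 : 2 * ((1 / (G - lam)) * ‖dd‖ ^ 2) - (1 / (G - lam)) * ‖dd‖ ^ 2
          = (1 / (G - lam)) * ‖dd‖ ^ 2 := by ring
      have h3 : (1 / (G - lam)) * ‖dd‖ ^ 2 ≤ (inner ℝ dd s : ℝ) := by linarith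
      calc ‖dd‖ ^ 2 = (G - lam) * ((1 / (G - lam)) * ‖dd‖ ^ 2) := by field_simp
        _ ≤ (G - lam) * (inner ℝ dd s : ℝ) := by
            exact mul_le_mul_of_nonneg_left h3 (le_of_lt hl)
  -- expand to get coercivity
  have hdd2 : ‖dd‖ ^ 2 = ‖D‖ ^ 2 - 2 * lam * (inner ℝ D s : ℝ) + lam ^ 2 * ‖s‖ ^ 2 := by
    rw [hdd, norm_sub_sq_real, real_inner_smul_right, norm_smul, Real.norm_eq_abs, mul_pow,
      sq_abs]
    ring
  have hdds : (inner ℝ dd s : ℝ) = (inner ℝ D s : ℝ) - lam * ‖s‖ ^ 2 := by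
    rw [hdd, inner_sub_left, real_inner_smul_left, real_inner_self_eq_norm_sq]
  rw [hdd2, hdds] at hcoco
  nlinarith [hcoco]

lemma step_bound (F : E → ℝ) (lam G : ℝ) (hlam : 0 < lam) (hG : 0 < G) (hlamG : lam ≤ G)
    (hdiff : Differentiable ℝ F)
    (hsc : ∀ x y : E, F y ≥ F x + (inner ℝ (gradient F x) (y - x) : ℝ) + (lam / 2) * ‖y - x‖ ^ 2)
    (hsmooth : ∀ x y : E, ‖gradient F x - gradient F y‖ ≤ G * ‖x - y‖)
    (wstar : E) (hstar : gradient F wstar = 0) (u : E) :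
    ‖u - wstar - (1 / G) • gradient F u‖ ≤
      Real.sqrt ((G - lam) / (G + lam)) * ‖u - wstar‖ := by
  have hco := coercive F lam G hlam hG hlamG hdiff hsc hsmooth u wstar
  rw [hstar, sub_zero] at hco
  set D := gradient F u with hD
  set s := u - wstar with hs
  have hsq : ‖s - (1 / G) • D‖ ^ 2 ≤ (G - lam) / (G + lam) * ‖s‖ ^ 2 := by
    have hexp : ‖s - (1 / G) • D‖ ^ 2
        = ‖s‖ ^ 2 - 2 * (1 / G) * (inner ℝ s D : ℝ) + (1 / G) ^ 2 * ‖D‖ ^ 2 := by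
      rw [norm_sub_sq_real, real_inner_smul_right, norm_smul, Real.norm_eq_abs, mul_pow, sq_abs]
      ring
    have hsym : (inner ℝ s D : ℝ) = (inner ℝ D s : ℝ) := real_inner_comm D s
    rw [hexp, hsym]
    have hGl : 0 < G + lam := by linarith
    rw [div_mul_eq_mul_div, le_div_iff₀ hGl]
    have h1 : (1 / G) ^ 2 = 1 / G ^ 2 := by field_simp
    have h2 : 0 ≤ ‖D‖ ^ 2 := sq_nonneg _
    have hG2 : 0 < G ^ 2 := by positivity
    -- multiply out
    rw [h1]
    have key : G ^ 2 * ((‖s‖ ^ 2 - 2 * (1 / G) * (inner ℝ D s : ℝ) + 1 / G ^ 2 * ‖D‖ ^ 2)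
        * (G + lam)) ≤ G ^ 2 * ((G - lam) * ‖s‖ ^ 2) := by
      have e1 : G ^ 2 * ((‖s‖ ^ 2 - 2 * (1 / G) * (inner ℝ D s : ℝ) + 1 / G ^ 2 * ‖D‖ ^ 2)
          * (G + lam)) = G ^ 2 * (G + lam) * ‖s‖ ^ 2
            - 2 * G * ((G + lam) * (inner ℝ D s : ℝ)) + (G + lam) * ‖D‖ ^ 2 := by
        field_simp
      rw [e1]
      have h3 : 2 * G * (‖D‖ ^ 2 + lam * G * ‖s‖ ^ 2) ≤
          2 * G * ((G + lam) * (inner ℝ D s : ℝ)) := by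
        apply mul_le_mul_of_nonneg_left hco (by positivity)
      nlinarith [h3, sq_nonneg ‖D‖, sq_nonneg ‖s‖]
    have := le_of_mul_le_mul_left (by
      calc G ^ 2 * ((‖s‖ ^ 2 - 2 * (1 / G) * (inner ℝ D s : ℝ) + 1 / G ^ 2 * ‖D‖ ^ 2) * (G + lam))
          ≤ G ^ 2 * ((G - lam) * ‖s‖ ^ 2) := key) hG2
    linarith [this]
  calc ‖s - (1 / G) • D‖ = Real.sqrt (‖s - (1 / G) • D‖ ^ 2) := by
        rw [Real.sqrt_sq (norm_nonneg _)]
    _ ≤ Real.sqrt ((G - lam) / (G + lam) * ‖s‖ ^ 2) := Real.sqrt_le_sqrt hsq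
    _ = Real.sqrt ((G - lam) / (G + lam)) * ‖s‖ := by
        rw [Real.sqrt_mul (div_nonneg (by linarith) (by linarith)),
          Real.sqrt_sq (norm_nonneg _)]

/-- Asymptotic error floor of inexact gradient descent. -/
theorem stmt4 (d : ℕ) (F : EuclideanSpace ℝ (Fin d) → ℝ) (lam G Δ : ℝ)
    (hlam : 0 < lam) (hG : 0 < G) (hlamG : lam ≤ G) (hΔ : 0 ≤ Δ)
    (hdiff : Differentiable ℝ F)
    (hsc : ∀ x y, F y ≥ F x + (inner ℝ (gradient F x) (y - x) : ℝ) + (lam / 2) * ‖y - x‖ ^ 2)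
    (hsmooth : ∀ x y, ‖gradient F x - gradient F y‖ ≤ G * ‖x - y‖)
    (wstar : EuclideanSpace ℝ (Fin d)) (hmin : ∀ w, F wstar ≤ F w)
    (w : ℕ → EuclideanSpace ℝ (Fin d)) (gt : ℕ → EuclideanSpace ℝ (Fin d))
    (hupd : ∀ t, w (t + 1) = w t - (1 / G) • gt t)
    (herr : ∀ t, ‖gt t - gradient F (w t)‖ ≤ Δ) :
    Filter.limsup (fun T : ℕ => ‖w T - wstar‖) Filter.atTop ≤ (Δ / G) * ((G + lam) / lam) ∧
    Filter.limsup (fun T : ℕ => ‖w T - wstar‖) Filter.atTop ≤ 2 * Δ / lam := by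
  have hstar : gradient F wstar = 0 := grad_zero F hdiff wstar hmin
  set ρ : ℝ := Real.sqrt ((G - lam) / (G + lam)) with hρ
  have hρ0 : 0 ≤ ρ := Real.sqrt_nonneg _
  have hGl : 0 < G + lam := by linarith
  have hρlt : ρ ≤ G / (G + lam) := by
    rw [hρ]
    have h1 : (G - lam) / (G + lam) ≤ (G / (G + lam)) ^ 2 := by
      rw [div_pow, div_le_div_iff₀ hGl (by positivity)]
      nlinarith [hlam, hlamG, mul_nonneg (mul_nonneg hlam.le hlam.le) (by linarith : (0:ℝ) ≤ G + lam)]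
    calc Real.sqrt ((G - lam) / (G + lam)) ≤ Real.sqrt ((G / (G + lam)) ^ 2) :=
          Real.sqrt_le_sqrt h1
      _ = G / (G + lam) := Real.sqrt_sq (by positivity)
  have hρ1 : ρ < 1 := lt_of_le_of_lt hρlt (by
    rw [div_lt_one hGl]; linarith)
  have h1ρ : lam / (G + lam) ≤ 1 - ρ := by
    have : G / (G + lam) + lam / (G + lam) = 1 := by field_simp
    linarith
  have h1ρ0 : 0 < 1 - ρ := by linarith
  set c : ℝ := Δ / G with hc
  have hc0 : 0 ≤ c := div_nonneg hΔ hG.le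
  -- one-step recurrence
  have hstep : ∀ t, ‖w (t + 1) - wstar‖ ≤ ρ * ‖w t - wstar‖ + c := by
    intro t
    have h1 : w (t + 1) - wstar
        = (w t - wstar - (1 / G) • gradient F (w t)) - (1 / G) • (gt t - gradient F (w t)) := by
      rw [hupd t, smul_sub]; abel
    rw [h1]
    calc ‖(w t - wstar - (1 / G) • gradient F (w t)) - (1 / G) • (gt t - gradient F (w t))‖
        ≤ ‖w t - wstar - (1 / G) • gradient F (w t)‖ + ‖(1 / G) • (gt t - gradient F (w t))‖ :=
          norm_sub_le _ _
      _ ≤ ρ * ‖w t - wstar‖ + c := by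
          have h2 := step_bound F lam G hlam hG hlamG hdiff hsc hsmooth wstar hstar (w t)
          have h3 : ‖(1 / G) • (gt t - gradient F (w t))‖ ≤ c := by
            rw [norm_smul, Real.norm_eq_abs, abs_of_pos (by positivity : (0:ℝ) < 1 / G)]
            rw [hc]
            calc 1 / G * ‖gt t - gradient F (w t)‖ ≤ 1 / G * Δ := by
                  exact mul_le_mul_of_nonneg_left (herr t) (by positivity)
              _ = Δ / G := by ring
          exact add_le_add h2 h3
  -- iterate: e T ≤ ρ^T e0 + c/(1-ρ)
  have hiter : ∀ T, ‖w T - wstar‖ ≤ ρ ^ T * ‖w 0 - wstar‖ + c / (1 - ρ) := by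
    intro T
    induction T with
    | zero => simp [div_nonneg hc0 h1ρ0.le]
    | succ t ih =>
      calc ‖w (t + 1) - wstar‖ ≤ ρ * ‖w t - wstar‖ + c := hstep t
        _ ≤ ρ * (ρ ^ t * ‖w 0 - wstar‖ + c / (1 - ρ)) + c :=
            add_le_add_left (mul_le_mul_of_nonneg_left ih hρ0) c
        _ = ρ ^ (t + 1) * ‖w 0 - wstar‖ + (ρ * (c / (1 - ρ)) + c) := by ring
        _ ≤ ρ ^ (t + 1) * ‖w 0 - wstar‖ + c / (1 - ρ) := by
            have : ρ * (c / (1 - ρ)) + c = c / (1 - ρ) := by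
              field_simp; ring
            rw [this]
  -- limsup bound
  have hlim : Filter.limsup (fun T : ℕ => ‖w T - wstar‖) Filter.atTop ≤ c / (1 - ρ) := by
    have htend : Filter.Tendsto (fun T : ℕ => ρ ^ T * ‖w 0 - wstar‖ + c / (1 - ρ))
        Filter.atTop (nhds (c / (1 - ρ))) := by
      have h0 : Filter.Tendsto (fun T : ℕ => ρ ^ T) Filter.atTop (nhds 0) :=
        tendsto_pow_atTop_nhds_zero_of_lt_one hρ0 hρ1
      have := (h0.mul_const ‖w 0 - wstar‖).add_const (c / (1 - ρ))
      simpa using this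
    have hbdd : Filter.IsBoundedUnder (· ≤ ·) Filter.atTop
        (fun T : ℕ => ρ ^ T * ‖w 0 - wstar‖ + c / (1 - ρ)) := htend.isBoundedUnder_le
    have hcob : Filter.IsCoboundedUnder (· ≤ ·) Filter.atTop
        (fun T : ℕ => ‖w T - wstar‖) := by
      apply Filter.IsBoundedUnder.isCoboundedUnder_le
      exact Filter.isBoundedUnder_of ⟨0, fun T => norm_nonneg _⟩
    calc Filter.limsup (fun T : ℕ => ‖w T - wstar‖) Filter.atTop
        ≤ Filter.limsup (fun T : ℕ => ρ ^ T * ‖w 0 - wstar‖ + c / (1 - ρ)) Filter.atTop :=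
          Filter.limsup_le_limsup (Filter.Eventually.of_forall hiter) hcob hbdd
      _ = c / (1 - ρ) := htend.limsup_eq
  have hfinal : c / (1 - ρ) ≤ (Δ / G) * ((G + lam) / lam) := by
    have h2 : c / (1 - ρ) ≤ c / (lam / (G + lam)) := by
      apply div_le_div_of_nonneg_left hc0 (by positivity) h1ρ
    calc c / (1 - ρ) ≤ c / (lam / (G + lam)) := h2
      _ = (Δ / G) * ((G + lam) / lam) := by
        rw [hc]; field_simp
  have hfinal2 : (Δ / G) * ((G + lam) / lam) ≤ 2 * Δ / lam := by
    rw [div_mul_div_comm, div_le_div_iff₀ (by positivity) hlam]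
    nlinarith [hΔ, hlamG, hG, mul_nonneg (mul_nonneg hΔ hlam.le) (sub_nonneg.mpr hlamG)]
  exact ⟨le_trans hlim hfinal, le_trans (le_trans hlim hfinal) hfinal2⟩
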